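/- Let G be a finite group of odd order such that every element of its commutator subgroup can be written as a product of two commutators, i.e., for every x in the commutator subgroup there exist a, b, c, d in G with x = [a,b]·[c,d]. Then the K-set of G coincides with (the underlying set of) its commutator subgroup. -/

import Mathlib

/-- The K-set of a group `G`: the set of all elements expressible as a product,
taken in some order, of all the non-identity elements of `G`, each occurring
exactly once. -/
def KSet (G : Type*) [Group G] : Set G :=
  {x | ∃ l : List G, l.Nodup ∧ (∀ g : G, g ∈ l ↔ g ≠ 1) ∧ l.prod = x}

open scoped commutatorElement

namespace KSetAux

variable {G : Type*} [Group G] [Fintype G]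

lemma eq_one_of_mul_self (hG : Odd (Fintype.card G)) {g : G} (hg : g * g = 1) :
    g = 1 := by
  have h2 : orderOf g ∣ 2 := orderOf_dvd_of_pow_eq_one (by simpa [pow_two] using hg)
  rcases (Nat.dvd_prime Nat.prime_two).mp h2 with h | h
  · exact orderOf_eq_one_iff.mp h
  · exfalso
    have hc : orderOf g ∣ Fintype.card G := orderOf_dvd_card
    rw [h] at hc
    rw [Nat.odd_iff] at hG
    omega

lemma ne_inv_of_ne_one (hG : Odd (Fintype.card G)) {g : G} (hg : g ≠ 1) :
    g ≠ g⁻¹ := fun h => hg (eq_one_of_mul_self hG (by rw [← eq_inv_iff_mul_eq_one]; exact h))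

/-- the square root of `g` in a group of odd order -/
noncomputable def sq (g : G) : G := g ^ ((Fintype.card G + 1) / 2)

lemma sq_mul_self (hG : Odd (Fintype.card G)) (g : G) : sq g * sq g = g := by
  have h2 : (Fintype.card G + 1) / 2 + (Fintype.card G + 1) / 2 = Fintype.card G + 1 := by
    rw [Nat.odd_iff] at hG; omega
  rw [sq, ← pow_add, h2, pow_succ, pow_card_eq_one, one_mul]

lemma mul_self_eq_iff (hG : Odd (Fintype.card G)) {u g : G} :
    u * u = g ↔ u = sq g := by
  constructor
  · intro hu
    have h2 : (Fintype.card G + 1) / 2 * 2 = Fintype.card G + 1 := by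
      rw [Nat.odd_iff] at hG; omega
    have : u = (u * u) ^ ((Fintype.card G + 1) / 2) := by
      rw [← pow_two, ← pow_mul, mul_comm 2, h2, pow_succ, pow_card_eq_one, one_mul]
    rw [this, hu, sq]
  · rintro rfl; exact sq_mul_self hG g

lemma mem_KSet_of_word_aux [DecidableEq G] (hG : Odd (Fintype.card G)) :
    ∀ (k : ℕ) (w : List G), w.Nodup → (∀ g ∈ w, g ≠ (1 : G)) → (∀ g ∈ w, g⁻¹ ∈ w) →
      ((Finset.univ.erase (1 : G)) \ w.toFinset).card = k → w.prod ∈ KSet G := by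
  intro k
  induction k using Nat.strong_induction_on with
  | _ k ih =>
    intro w hnd h1 hinv hcard
    rcases Nat.eq_zero_or_pos k with rfl | hk
    · have hempty : (Finset.univ.erase (1 : G)) \ w.toFinset = ∅ :=
        Finset.card_eq_zero.mp hcard
      refine ⟨w, hnd, fun g => ⟨fun hg => h1 g hg, fun hg => ?_⟩, rfl⟩
      by_contra hgw
      have hmem : g ∈ (Finset.univ.erase (1 : G)) \ w.toFinset := by
        simp [Finset.mem_sdiff, Finset.mem_erase, hg, hgw]
      rw [hempty] at hmem
      exact absurd hmem (Finset.notMem_empty g)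
    · obtain ⟨g, hg⟩ := Finset.card_pos.mp (hcard ▸ hk)
      rw [Finset.mem_sdiff, Finset.mem_erase] at hg
      obtain ⟨⟨hg1, -⟩, hgw'⟩ := hg
      have hgw : g ∉ w := fun hh => hgw' (List.mem_toFinset.mpr hh)
      have hgi1 : g⁻¹ ≠ 1 := fun hh => hg1 (by simpa using congrArg (·⁻¹) hh)
      have hgiw : g⁻¹ ∉ w := fun hh => hgw (by simpa using hinv _ hh)
      have hggi : g ≠ g⁻¹ := ne_inv_of_ne_one hG hg1
      have key : (g :: g⁻¹ :: w).prod ∈ KSet G := by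
        refine ih (k - 2) (by omega) _ ?_ ?_ ?_ ?_
        · refine List.nodup_cons.mpr ⟨?_, List.nodup_cons.mpr ⟨hgiw, hnd⟩⟩
          simp only [List.mem_cons]
          rintro (hh | hh)
          · exact hggi hh
          · exact hgw hh
        · intro x hx
          rcases List.mem_cons.mp hx with rfl | hx
          · exact hg1
          rcases List.mem_cons.mp hx with rfl | hx
          · exact hgi1
          · exact h1 x hx
        · intro x hx
          rcases List.mem_cons.mp hx with rfl | hx
          · simp
          rcases List.mem_cons.mp hx with rfl | hx
          · simp
          · simp only [List.mem_cons]
            exact Or.inr (Or.inr (hinv x hx))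
        · have hset : (Finset.univ.erase (1 : G)) \ (g :: g⁻¹ :: w).toFinset =
              ((Finset.univ.erase (1 : G)) \ w.toFinset) \ {g, g⁻¹} := by
            ext x
            simp only [Finset.mem_sdiff, List.toFinset_cons, Finset.mem_insert,
              Finset.mem_erase, List.mem_toFinset, Finset.mem_univ, and_true,
              Finset.mem_singleton]
            tauto
          rw [hset, Finset.card_sdiff_of_subset, hcard]
          · have : ({g, g⁻¹} : Finset G).card = 2 := by
              rw [Finset.card_insert_of_notMem (by simpa using hggi), Finset.card_singleton]
            rw [this]
          · intro x hx
            simp only [Finset.mem_insert, Finset.mem_singleton] at hx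
            rw [Finset.mem_sdiff, Finset.mem_erase]
            rcases hx with rfl | rfl
            · exact ⟨⟨hg1, Finset.mem_univ _⟩, hgw'⟩
            · exact ⟨⟨hgi1, Finset.mem_univ _⟩, fun hh => hgiw (List.mem_toFinset.mp hh)⟩
      have : (g :: g⁻¹ :: w).prod = w.prod := by
        simp [mul_assoc]
      rwa [this] at key

lemma mem_KSet_of_word [DecidableEq G] (hG : Odd (Fintype.card G)) (w : List G)
    (hnd : w.Nodup) (h1 : ∀ g ∈ w, g ≠ (1 : G)) (hinv : ∀ g ∈ w, g⁻¹ ∈ w) :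
    w.prod ∈ KSet G :=
  mem_KSet_of_word_aux hG _ w hnd h1 hinv rfl

lemma subset_commutator [DecidableEq G] (hG : Odd (Fintype.card G)) {x : G}
    (hx : x ∈ KSet G) : x ∈ commutator G := by
  obtain ⟨l, hnd, hcov, hprod⟩ := hx
  set φ := Abelianization.of (G := G) with hφ
  have h1 : φ x = (l.map φ).prod := by rw [← hprod, map_list_prod]
  have h2 : (l.map φ).prod = ∏ g ∈ l.toFinset, φ g := (List.prod_toFinset φ hnd).symm
  have h3 : l.toFinset = Finset.univ.erase (1 : G) := by
    ext g
    simp only [List.mem_toFinset, Finset.mem_erase, Finset.mem_univ, and_true]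
    exact hcov g
  have h4 : ∏ g ∈ Finset.univ.erase (1 : G), φ g = ∏ g : G, φ g := by
    rw [← Finset.mul_prod_erase Finset.univ φ (Finset.mem_univ (1 : G)), map_one, one_mul]
  have hProd1 : (∏ g : G, φ g) = 1 := by
    have e1 : (∏ g : G, φ g) = ∏ g : G, φ g⁻¹ :=
      Fintype.prod_bijective (·⁻¹) (Equiv.inv G).bijective _ _ (fun g => by simp)
    have e2 : (∏ g : G, φ g⁻¹) = (∏ g : G, φ g)⁻¹ := by
      rw [← Finset.prod_inv_distrib]
      exact Finset.prod_congr rfl (fun g _ => map_inv φ g)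
    have h6 : (∏ g : G, φ g) * (∏ g : G, φ g) = 1 :=
      mul_eq_one_iff_eq_inv.mpr (e1.trans e2)
    have ho2 : orderOf (∏ g : G, φ g) ∣ 2 :=
      orderOf_dvd_of_pow_eq_one (by rw [pow_two]; exact h6)
    have hoc : orderOf (∏ g : G, φ g) ∣ Nat.card (Abelianization G) :=
      orderOf_dvd_natCard _
    have hsurj : Function.Surjective (φ : G → Abelianization G) := fun y =>
      Quotient.inductionOn y (fun g => ⟨g, rfl⟩)
    have hdvd : Nat.card (Abelianization G) ∣ Nat.card G :=
      Subgroup.card_dvd_of_surjective φ hsurj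
    have hodd : Odd (Nat.card (Abelianization G)) :=
      hG.of_dvd_nat (by simpa [Nat.card_eq_fintype_card] using hdvd)
    rcases (Nat.dvd_prime Nat.prime_two).mp ho2 with h | h
    · exact orderOf_eq_one_iff.mp h
    · exfalso
      rw [Nat.odd_iff] at hodd
      have := h ▸ hoc
      omega
  have hxone : φ x = 1 := by rw [h1, h2, h3, h4, hProd1]
  exact (QuotientGroup.eq_one_iff x).mp hxone

lemma comm_of_card_15 (h15 : Fintype.card G = 15) (a b : G) : a * b = b * a := by
  have hcard : Nat.card G = 15 := by rw [Nat.card_eq_fintype_card, h15]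
  haveI f3 : Fact (Nat.Prime 3) := ⟨by norm_num⟩
  haveI f5 : Fact (Nat.Prime 5) := ⟨by norm_num⟩
  have key : ∀ (p q : ℕ) (_ : Nat.Prime p) (_ : Nat.Prime q) (_ : Fact (Nat.Prime p))
      (_ : p * q = 15) (_ : ¬ p ^ 2 ∣ 15) (_ : ¬ q % p = 1),
      ∃ P : Sylow p G, (P : Subgroup G).Normal ∧ Nat.card (P : Subgroup G) = p := by
    intro p q hp hq hfp hpq hp2 hqmod
    obtain ⟨P⟩ : Nonempty (Sylow p G) := inferInstance
    obtain ⟨n, hn⟩ := IsPGroup.iff_card.mp P.isPGroup'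
    have hdvd : Nat.card (P : Subgroup G) ∣ 15 := hcard ▸ Subgroup.card_subgroup_dvd_card _
    have hpd : p ∣ Nat.card (P : Subgroup G) :=
      P.dvd_card_of_dvd_card (by rw [hcard, ← hpq]; exact Dvd.intro q rfl)
    have hn1 : n = 1 := by
      rcases n with _ | _ | n
      · exfalso
        rw [hn, pow_zero, Nat.dvd_one] at hpd
        exact hp.ne_one hpd
      · rfl
      · exfalso
        apply hp2
        calc p ^ 2 ∣ p ^ (n + 2) := pow_dvd_pow p (by omega)
        _ ∣ 15 := hn ▸ hdvd
    have hcardP : Nat.card (P : Subgroup G) = p := by rw [hn, hn1, pow_one]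
    have hindex : (P : Subgroup G).index = q := by
      have := Subgroup.card_mul_index (P : Subgroup G)
      rw [hcardP, hcard] at this
      have hq0 : 0 < p := hp.pos
      nlinarith [this, hpq]
    have hs1 : Nat.card (Sylow p G) = 1 := by
      have hdvd' : Nat.card (Sylow p G) ∣ q := hindex ▸ P.card_dvd_index
      have hmod : Nat.card (Sylow p G) % p = 1 % p := card_sylow_modEq_one p G
      rcases (Nat.dvd_prime hq).mp hdvd' with h | h
      · exact h
      · exfalso
        rw [h, Nat.one_mod_eq_one.mpr hp.one_lt.ne'] at hmod
        exact hqmod hmod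
    haveI : Subsingleton (Sylow p G) := (Nat.card_eq_one_iff_unique.mp hs1).1
    have hnorm : (P : Subgroup G).Normal := by
      rw [← Subgroup.normalizer_eq_top_iff, eq_top_iff]
      intro g _
      refine Sylow.smul_eq_iff_mem_normalizer.mp ?_
      exact Subsingleton.elim _ _
    exact ⟨P, hnorm, hcardP⟩
  obtain ⟨P3, hn3, hc3⟩ :=
    key 3 5 (by norm_num) (by norm_num) f3 (by norm_num) (by norm_num) (by norm_num)
  obtain ⟨P5, hn5, hc5⟩ :=
    key 5 3 (by norm_num) (by norm_num) f5 (by norm_num) (by norm_num) (by norm_num)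
  have hmem : ∀ (p : ℕ) (_ : Fact (Nat.Prime p)) (P : Sylow p G), (P : Subgroup G).Normal →
      (P : Subgroup G).index.Prime → ⁅a, b⁆ ∈ (P : Subgroup G) := by
    intro p hfp P hnorm hip
    haveI : Fact ((P : Subgroup G).index.Prime) := ⟨hip⟩
    have hcy : IsCyclic (G ⧸ (P : Subgroup G)) :=
      isCyclic_of_prime_card (p := (P : Subgroup G).index) (Subgroup.index_eq_card _).symm
    letI : CommGroup (G ⧸ (P : Subgroup G)) := IsCyclic.commGroup
    have hker := Abelianization.commutator_subset_ker (QuotientGroup.mk' (P : Subgroup G))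
    have hmemc : ⁅a, b⁆ ∈ commutator G := Subgroup.commutator_mem_commutator trivial trivial
    have h2 := hker hmemc
    rw [MonoidHom.mem_ker, QuotientGroup.mk'_apply, QuotientGroup.eq_one_iff] at h2
    exact h2
  have hi3 : (P3 : Subgroup G).index = 5 := by
    have := Subgroup.card_mul_index (P3 : Subgroup G)
    rw [hc3, hcard] at this; omega
  have hi5 : (P5 : Subgroup G).index = 3 := by
    have := Subgroup.card_mul_index (P5 : Subgroup G)
    rw [hc5, hcard] at this; omega
  have hm3 : ⁅a, b⁆ ∈ (P3 : Subgroup G) := hmem 3 f3 P3 hn3 (by rw [hi3]; norm_num)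
  have hm5 : ⁅a, b⁆ ∈ (P5 : Subgroup G) := hmem 5 f5 P5 hn5 (by rw [hi5]; norm_num)
  have ho3 : orderOf ⁅a, b⁆ ∣ 3 := hc3 ▸ Subgroup.orderOf_dvd_natCard _ hm3
  have ho5 : orderOf ⁅a, b⁆ ∣ 5 := hc5 ▸ Subgroup.orderOf_dvd_natCard _ hm5
  have hord : orderOf ⁅a, b⁆ = 1 := Nat.eq_one_of_dvd_coprimes (by norm_num) ho3 ho5
  have h1 : ⁅a, b⁆ = 1 := orderOf_eq_one_iff.mp hord
  exact commutatorElement_eq_one_iff_mul_comm.mp h1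

lemma comm_of_card_lt (hG : Odd (Fintype.card G)) (hlt : Fintype.card G < 21)
    (a b : G) : a * b = b * a := by
  have hpos : 0 < Fintype.card G := Fintype.card_pos
  have hodd := hG
  rw [Nat.odd_iff] at hodd
  have hnat : Nat.card G = Fintype.card G := Nat.card_eq_fintype_card
  have hprime : ∀ p : ℕ, Nat.Prime p → Fintype.card G = p → a * b = b * a := by
    intro p hpp hcp
    haveI : Fact (Nat.Prime p) := ⟨hpp⟩
    haveI : IsCyclic G := isCyclic_of_prime_card (hnat.trans hcp)
    letI : CommGroup G := IsCyclic.commGroup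
    exact mul_comm a b
  have hcase : Fintype.card G = 1 ∨ Fintype.card G = 3 ∨ Fintype.card G = 5 ∨
      Fintype.card G = 7 ∨ Fintype.card G = 9 ∨ Fintype.card G = 11 ∨
      Fintype.card G = 13 ∨ Fintype.card G = 15 ∨ Fintype.card G = 17 ∨
      Fintype.card G = 19 := by omega
  rcases hcase with h | h | h | h | h | h | h | h | h | h
  · haveI : Subsingleton G := Fintype.card_le_one_iff_subsingleton.mp h.le
    exact Subsingleton.elim _ _
  · exact hprime 3 (by norm_num) h
  · exact hprime 5 (by norm_num) h
  · exact hprime 7 (by norm_num) h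
  · haveI : Fact (Nat.Prime 3) := ⟨by norm_num⟩
    exact IsPGroup.commutative_of_card_eq_prime_sq (p := 3) (by rw [hnat, h]; norm_num) a b
  · exact hprime 11 (by norm_num) h
  · exact hprime 13 (by norm_num) h
  · exact comm_of_card_15 h a b
  · exact hprime 17 (by norm_num) h
  · exact hprime 19 (by norm_num) h

lemma exists_not_mem [DecidableEq G] (l : List G) (hl : l.length < Fintype.card G) :
    ∃ u : G, u ∉ l := by
  by_contra hc
  push_neg at hc
  have h1 : (Finset.univ : Finset G) ⊆ l.toFinset := fun x _ => List.mem_toFinset.mpr (hc x)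
  have h2 := Finset.card_le_card h1
  rw [Finset.card_univ] at h2
  have h3 := l.toFinset_card_le
  omega

lemma single_commutator_mem [DecidableEq G] (hG : Odd (Fintype.card G)) {c d : G}
    (hcd : ⁅c, d⁆ ≠ 1) : ⁅c, d⁆ ∈ KSet G := by
  have hc1 : c ≠ 1 := fun h => hcd (commutatorElement_eq_one_iff_mul_comm.mpr (by rw [h]; simp))
  have hd1 : d ≠ 1 := fun h => hcd (commutatorElement_eq_one_iff_mul_comm.mpr (by rw [h]; simp))
  have hci : c ≠ c⁻¹ := ne_inv_of_ne_one hG hc1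
  have hdi : d ≠ d⁻¹ := ne_inv_of_ne_one hG hd1
  have hcd' : c ≠ d := fun h => hcd (commutatorElement_eq_one_iff_mul_comm.mpr (by rw [h]))
  have hcdi : c ≠ d⁻¹ := fun h => hcd (commutatorElement_eq_one_iff_mul_comm.mpr (by rw [h]; simp))
  have hprod : List.prod [c, d, c⁻¹, d⁻¹] = ⁅c, d⁆ := by
    simp [commutatorElement_def, mul_assoc]
  rw [← hprod]
  apply mem_KSet_of_word hG
  · refine List.nodup_cons.mpr ⟨?_, List.nodup_cons.mpr ⟨?_,
      List.nodup_cons.mpr ⟨?_, List.nodup_singleton _⟩⟩⟩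
    · simp only [List.mem_cons, List.mem_singleton, List.not_mem_nil, or_false]
      push_neg
      exact ⟨hcd', hci, hcdi⟩
    · simp only [List.mem_cons, List.mem_singleton, List.not_mem_nil, or_false]
      push_neg
      exact ⟨fun h => hcdi (by rw [h]; simp), hdi⟩
    · simp only [List.mem_singleton]
      exact fun h => hcd' (by simpa using congrArg (·⁻¹) h)
  · intro g hg
    rcases List.mem_cons.mp hg with rfl | hg
    · exact hc1
    rcases List.mem_cons.mp hg with rfl | hg
    · exact hd1
    rcases List.mem_cons.mp hg with rfl | hg
    · simpa using hc1
    rcases List.mem_cons.mp hg with rfl | hg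
    · simpa using hd1
    · simp at hg
  · intro g hg
    rcases List.mem_cons.mp hg with rfl | hg
    · simp
    rcases List.mem_cons.mp hg with rfl | hg
    · simp
    rcases List.mem_cons.mp hg with rfl | hg
    · simp
    rcases List.mem_cons.mp hg with rfl | hg
    · simp
    · simp at hg

lemma two_commutators_mem [DecidableEq G] (hG : Odd (Fintype.card G)) {a b c d : G}
    (hab : ⁅a, b⁆ ≠ 1) (hcd : ⁅c, d⁆ ≠ 1) : ⁅a, b⁆ * ⁅c, d⁆ ∈ KSet G := by
  -- the group is nonabelian, hence has cardinality at least 21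
  have h21 : 21 ≤ Fintype.card G := by
    by_contra hlt
    exact hab (commutatorElement_eq_one_iff_mul_comm.mpr
      (comm_of_card_lt hG (by omega) a b))
  -- basic facts about a, b, c, d
  have ha1 : a ≠ 1 := fun h => hab (commutatorElement_eq_one_iff_mul_comm.mpr (by rw [h]; simp))
  have hb1 : b ≠ 1 := fun h => hab (commutatorElement_eq_one_iff_mul_comm.mpr (by rw [h]; simp))
  have hc1 : c ≠ 1 := fun h => hcd (commutatorElement_eq_one_iff_mul_comm.mpr (by rw [h]; simp))
  have hd1 : d ≠ 1 := fun h => hcd (commutatorElement_eq_one_iff_mul_comm.mpr (by rw [h]; simp))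
  have hab' : a ≠ b := fun h => hab (commutatorElement_eq_one_iff_mul_comm.mpr (by rw [h]))
  have hai : a ≠ a⁻¹ := ne_inv_of_ne_one hG ha1
  have hbi : b ≠ b⁻¹ := ne_inv_of_ne_one hG hb1
  have habi : a ≠ b⁻¹ := fun h => hab (commutatorElement_eq_one_iff_mul_comm.mpr (by rw [h]; simp))
  -- choose the first fresh element u
  obtain ⟨u, hu⟩ := exists_not_mem
    [1, c, sq c, a, b, a⁻¹, b⁻¹, c * a, c * b, c * a⁻¹, c * b⁻¹] (by simp; omega)
  simp only [List.mem_cons, List.not_mem_nil, or_false] at hu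
  push_neg at hu
  obtain ⟨hu1, huc, husq, hua, hub, huai, hubi, huca, hucb, hucai, hucbi⟩ := hu
  -- choose the second fresh element v
  obtain ⟨v, hv⟩ := exists_not_mem
    [1, d, sq d, a, b, a⁻¹, b⁻¹, u, u⁻¹, u⁻¹ * c, c⁻¹ * u,
      d * a, d * b, d * a⁻¹, d * b⁻¹, d * u, d * u⁻¹, d * (u⁻¹ * c), d * (c⁻¹ * u)]
    (by simp; omega)
  simp only [List.mem_cons, List.not_mem_nil, or_false] at hv
  push_neg at hv
  obtain ⟨hv1, hvd, hvsq, hva, hvb, hvai, hvbi, hvu, hvui, hvuc, hvcu,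
    hvda, hvdb, hvdai, hvdbi, hvdu, hvdui, hvduc, hvdcu⟩ := hv
  -- the word
  have hprod : List.prod
      [a, b, a⁻¹, b⁻¹, u, u⁻¹ * c, v, v⁻¹ * d, c⁻¹ * u, u⁻¹, d⁻¹ * v, v⁻¹]
      = ⁅a, b⁆ * ⁅c, d⁆ := by
    simp [commutatorElement_def, mul_assoc]
  rw [← hprod]
  apply mem_KSet_of_word hG
  -- Nodup
  · refine List.nodup_cons.mpr ⟨?_, List.nodup_cons.mpr ⟨?_, List.nodup_cons.mpr ⟨?_,
      List.nodup_cons.mpr ⟨?_, List.nodup_cons.mpr ⟨?_, List.nodup_cons.mpr ⟨?_,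
      List.nodup_cons.mpr ⟨?_, List.nodup_cons.mpr ⟨?_, List.nodup_cons.mpr ⟨?_,
      List.nodup_cons.mpr ⟨?_, List.nodup_cons.mpr ⟨?_, List.nodup_singleton _⟩⟩⟩⟩⟩⟩⟩⟩⟩⟩⟩
    · -- a ∉ rest
      simp only [List.mem_cons, List.mem_singleton, List.not_mem_nil, or_false]
      push_neg
      refine ⟨hab', hai, habi, hua.symm, ?_, hva.symm, ?_, ?_, ?_, ?_, ?_⟩
      · exact fun h => hucai (by rw [h]; group)
      · exact fun h => hvdai (by rw [h]; group)
      · exact fun h => huca (by rw [h]; group)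
      · exact fun h => huai (by rw [h]; group)
      · exact fun h => hvda (by rw [h]; group)
      · exact fun h => hvai (by rw [h]; group)
    · -- b ∉ rest
      simp only [List.mem_cons, List.mem_singleton, List.not_mem_nil, or_false]
      push_neg
      refine ⟨?_, hbi, hub.symm, ?_, hvb.symm, ?_, ?_, ?_, ?_, ?_⟩
      · exact fun h => habi (by rw [h]; group)
      · exact fun h => hucbi (by rw [h]; group)
      · exact fun h => hvdbi (by rw [h]; group)
      · exact fun h => hucb (by rw [h]; group)
      · exact fun h => hubi (by rw [h]; group)
      · exact fun h => hvdb (by rw [h]; group)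
      · exact fun h => hvbi (by rw [h]; group)
    · -- a⁻¹ ∉ rest
      simp only [List.mem_cons, List.mem_singleton, List.not_mem_nil, or_false]
      push_neg
      refine ⟨fun h => hab' (inv_injective h), fun h => huai h.symm, ?_,
        fun h => hvai h.symm, ?_, ?_, fun h => hua (inv_injective h).symm, ?_,
        fun h => hva (inv_injective h).symm⟩
      · exact fun h => huca (by
          have h2 : a = c⁻¹ * u := by rw [← inv_inv a, h]; group
          rw [h2]; group)
      · exact fun h => hvda (by
          have h2 : a = d⁻¹ * v := by rw [← inv_inv a, h]; group
          rw [h2]; group)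
      · exact fun h => hucai (by
          have h2 : a = u⁻¹ * c := by rw [← inv_inv a, h]; group
          rw [h2]; group)
      · exact fun h => hvdai (by
          have h2 : a = v⁻¹ * d := by rw [← inv_inv a, h]; group
          rw [h2]; group)
    · -- b⁻¹ ∉ rest
      simp only [List.mem_cons, List.mem_singleton, List.not_mem_nil, or_false]
      push_neg
      refine ⟨fun h => hubi h.symm, ?_, fun h => hvbi h.symm, ?_, ?_,
        fun h => hub (inv_injective h).symm, ?_, fun h => hvb (inv_injective h).symm⟩
      · exact fun h => hucb (by
          have h2 : b = c⁻¹ * u := by rw [← inv_inv b, h]; group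
          rw [h2]; group)
      · exact fun h => hvdb (by
          have h2 : b = d⁻¹ * v := by rw [← inv_inv b, h]; group
          rw [h2]; group)
      · exact fun h => hucbi (by
          have h2 : b = u⁻¹ * c := by rw [← inv_inv b, h]; group
          rw [h2]; group)
      · exact fun h => hvdbi (by
          have h2 : b = v⁻¹ * d := by rw [← inv_inv b, h]; group
          rw [h2]; group)
    · -- u ∉ rest
      simp only [List.mem_cons, List.mem_singleton, List.not_mem_nil, or_false]
      push_neg
      refine ⟨?_, hvu.symm, ?_, ?_, ne_inv_of_ne_one hG hu1, ?_, ?_⟩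
      · exact fun h => husq ((mul_self_eq_iff hG).mp (by nth_rewrite 2 [h]; group))
      · exact fun h => hvdui (by rw [h]; group)
      · exact fun h => hc1 (inv_eq_one.mp (right_eq_mul.mp h))
      · exact fun h => hvdu (by rw [h]; group)
      · exact fun h => hvui (by rw [h]; group)
    · -- u⁻¹ * c ∉ rest
      simp only [List.mem_cons, List.mem_singleton, List.not_mem_nil, or_false]
      push_neg
      refine ⟨hvuc.symm, ?_, ?_, ?_, ?_, ?_⟩
      · exact fun h => hvdcu (by
          rw [show v = d * (u⁻¹ * c)⁻¹ from by rw [h]; group]; group)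
      · exact fun h => huc (inv_mul_eq_one.mp (eq_one_of_mul_self hG
          (by nth_rewrite 2 [h]; group)))
      · exact fun h => hc1 (mul_eq_left.mp h)
      · exact fun h => hvduc (by rw [h]; group)
      · exact fun h => hvcu (by rw [← inv_inv v, ← h]; group)
    · -- v ∉ rest
      simp only [List.mem_cons, List.mem_singleton, List.not_mem_nil, or_false]
      push_neg
      refine ⟨?_, hvcu, hvui, ?_, ne_inv_of_ne_one hG hv1⟩
      · exact fun h => hvsq ((mul_self_eq_iff hG).mp (by nth_rewrite 2 [h]; group))
      · exact fun h => hd1 (inv_eq_one.mp (right_eq_mul.mp h))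
    · -- v⁻¹ * d ∉ rest
      simp only [List.mem_cons, List.mem_singleton, List.not_mem_nil, or_false]
      push_neg
      refine ⟨?_, ?_, ?_, ?_⟩
      · exact fun h => hvduc (by
          rw [show v = d * (c⁻¹ * u)⁻¹ from by rw [← h]; group]; group)
      · exact fun h => hvdu (by rw [← inv_inv u, ← h]; group)
      · exact fun h => hvd (inv_mul_eq_one.mp (eq_one_of_mul_self hG
          (by nth_rewrite 2 [h]; group)))
      · exact fun h => hd1 (mul_eq_left.mp h)
    · -- c⁻¹ * u ∉ rest
      simp only [List.mem_cons, List.mem_singleton, List.not_mem_nil, or_false]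
      push_neg
      refine ⟨?_, ?_, ?_⟩
      · exact fun h => husq ((mul_self_eq_iff hG).mp (by
          have h2 : u = c * u⁻¹ := by rw [← h]; group
          nth_rewrite 1 [h2]; group))
      · exact fun h => hvdcu (by rw [h]; group)
      · exact fun h => hvuc (by rw [← inv_inv v, ← h]; group)
    · -- u⁻¹ ∉ rest
      simp only [List.mem_cons, List.mem_singleton, List.not_mem_nil, or_false]
      push_neg
      refine ⟨?_, ?_⟩
      · exact fun h => hvdui (by rw [h]; group)
      · exact fun h => hvu (inv_injective h).symm
    · -- d⁻¹ * v ∉ [v⁻¹]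
      simp only [List.mem_singleton]
      exact fun h => hvsq ((mul_self_eq_iff hG).mp (by
        have h2 : v = d * v⁻¹ := by rw [← h]; group
        nth_rewrite 1 [h2]; group))
  -- all letters ≠ 1
  · intro g hg
    simp only [List.mem_cons, List.not_mem_nil, or_false] at hg
    rcases hg with rfl | rfl | rfl | rfl | rfl | rfl | rfl | rfl | rfl | rfl | rfl | rfl
    · exact ha1
    · exact hb1
    · exact inv_ne_one.mpr ha1
    · exact inv_ne_one.mpr hb1
    · exact hu1
    · exact fun h => huc (inv_mul_eq_one.mp h)
    · exact hv1
    · exact fun h => hvd (inv_mul_eq_one.mp h)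
    · exact fun h => huc ((inv_mul_eq_one.mp h).symm)
    · exact inv_ne_one.mpr hu1
    · exact fun h => hvd ((inv_mul_eq_one.mp h).symm)
    · exact inv_ne_one.mpr hv1
  -- closed under inverses
  · intro g hg
    simp only [List.mem_cons, List.not_mem_nil, or_false] at hg
    rcases hg with rfl | rfl | rfl | rfl | rfl | rfl | rfl | rfl | rfl | rfl | rfl | rfl <;>
      simp [List.mem_cons, mul_inv_rev]
end KSetAux

theorem KSet_eq_commutator_of_two_commutator_products (G : Type*) [Group G] [Fintype G]
    (hG : Odd (Fintype.card G))
    (h : ∀ x ∈ commutator G, ∃ a b c d : G, x = ⁅a, b⁆ * ⁅c, d⁆) :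
    KSet G = (commutator G : Subgroup G) := by
  classical
  ext x
  simp only [SetLike.mem_coe]
  constructor
  · exact fun hx => KSetAux.subset_commutator hG hx
  · intro hx
    obtain ⟨a, b, c, d, hx2⟩ := h x hx
    subst hx2
    by_cases h1 : ⁅a, b⁆ = 1
    · by_cases h2 : ⁅c, d⁆ = 1
      · rw [h1, h2, one_mul]
        simpa using KSetAux.mem_KSet_of_word hG [] (by simp) (by simp) (by simp)
      · rw [h1, one_mul]
        exact KSetAux.single_commutator_mem hG h2
    · by_cases h2 : ⁅c, d⁆ = 1
      · rw [h2, mul_one]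
        exact KSetAux.single_commutator_mem hG h1
      · exact KSetAux.two_commutators_mem hG h1 h2
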